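/- Self property: every λ-term β-reduces to its full superdevelopment, i.e., t →β* t• for all t. -/

import Mathlib

/-- Untyped λ-terms in de Bruijn representation (terms up to α-equivalence). -/
inductive Lam : Type
  | var : Nat → Lam
  | app : Lam → Lam → Lam
  | abs : Lam → Lam
  deriving DecidableEq

namespace Lam

/-- Lift (shift up) free variables ≥ k. -/
def lift : Lam → Nat → Lam
  | var i, k => if i < k then var i else var (i + 1)
  | app s t, k => app (lift s k) (lift t k)
  | abs t, k => abs (lift t (k + 1))

/-- Capture-avoiding substitution `t[x := u]`. -/
def subst : Lam → Nat → Lam → Lam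
  | var i, k, u => if i < k then var i else if i = k then u else var (i - 1)
  | app s t, k, u => app (subst s k u) (subst t k u)
  | abs t, k, u => abs (subst t (k + 1) (lift u 0))

/-- `x` occurs free in a term. -/
def IsFree (x : Nat) : Lam → Prop
  | var i => i = x
  | app s t => IsFree x s ∨ IsFree x t
  | abs t => IsFree (x + 1) t

/-- β-reduction: the compatible closure of the β-rule. -/
inductive Beta : Lam → Lam → Prop
  | beta (t s : Lam) : Beta (app (abs t) s) (subst t 0 s)
  | appL {s s' : Lam} (t : Lam) : Beta s s' → Beta (app s t) (app s' t)
  | appR (s : Lam) {t t' : Lam} : Beta t t' → Beta (app s t) (app s t')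
  | abs {t t' : Lam} : Beta t t' → Beta (abs t) (abs t')

/-- Reflexive-transitive closure of β-reduction. -/
abbrev Betas : Lam → Lam → Prop := Relation.ReflTransGen Beta

/-- Application with built-in β-reduction at the root. -/
def appBeta : Lam → Lam → Lam
  | abs u, v => subst u 0 v
  | s, v => app s v

/-- The full-superdevelopment map. -/
def dev : Lam → Lam
  | var i => var i
  | abs t => abs (dev t)
  | app s t => appBeta (dev s) (dev t)

end Lam


namespace Lam

theorem Betas.appCong {s s' t t' : Lam} (hs : Betas s s') (ht : Betas t t') :
    Betas (app s t) (app s' t') := by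
  exact Relation.ReflTransGen.trans
    (Relation.ReflTransGen.lift (fun x => app x t) (fun _ _ h => Beta.appL t h) _ _ hs)
    (Relation.ReflTransGen.lift (fun x => app s' x) (fun _ _ h => Beta.appR s' h) _ _ ht)

theorem Betas.absCong {t t' : Lam} (h : Betas t t') : Betas (abs t) (abs t') :=
  Relation.ReflTransGen.lift abs (fun _ _ h => Beta.abs h) _ _ h

theorem betas_appBeta (s t : Lam) : Betas (app s t) (appBeta s t) := by
  cases s with
  | abs u => exact Relation.ReflTransGen.single (Beta.beta u t)
  | var i => exact Relation.ReflTransGen.refl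
  | app a b => exact Relation.ReflTransGen.refl

end Lam

theorem self_dev (t : Lam) : Lam.Betas t (Lam.dev t) := by
  induction t with
  | var i => exact Relation.ReflTransGen.refl
  | abs u ih => exact Lam.Betas.absCong ih
  | app a b iha ihb =>
    exact Relation.ReflTransGen.trans (Lam.Betas.appCong iha ihb)
      (Lam.betas_appBeta _ _)
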